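/- Assume h : ℝ^p → [0,+∞] is convex, proper, and the minimization problem defining β̂ has at least one solution for every y ∈ ℝ^n and X ∈ ℝ^{n×p}. Define G(t) = sup_{β∈ℝ^p : ‖X(β−β*)‖ ≤ t} (εᵀX(β−β*) − h(β)) − t·‖X(β̂−β*)‖ for t ≥ 0. Then G is concave and the prediction error ‖X(β̂−β*)‖ is a maximizer of G. -/

import Mathlib

open scoped ENNReal

/-- Euclidean norm of a vector in `ℝ^k`. -/
noncomputable def l2norm {k : ℕ} (v : Fin k → ℝ) : ℝ := Real.sqrt (∑ i, (v i) ^ 2)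

/-- Euclidean inner product on `ℝ^k`. -/
noncomputable def dotp {k : ℕ} (u v : Fin k → ℝ) : ℝ := ∑ i, u i * v i

/-- `G(t) = sup_{β : ‖X(β-β*)‖ ≤ t} (εᵀX(β-β*) - h(β)) - t · r̂`, with values in `EReal`
(the sup over the empty set is `⊥ = -∞`); here `rhat` stands for `‖X(β̂-β*)‖`. -/
noncomputable def Gval {n p : ℕ} (X : Matrix (Fin n) (Fin p) ℝ) (bs : Fin p → ℝ)
    (h : (Fin p → ℝ) → ℝ≥0∞) (e : Fin n → ℝ) (rhat : ℝ) (t : ℝ) : EReal :=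
  sSup {x : EReal | ∃ b : Fin p → ℝ, l2norm (X.mulVec (b - bs)) ≤ t ∧
      x = (dotp e (X.mulVec (b - bs)) : EReal) - (h b : EReal)} - ((t * rhat : ℝ) : EReal)

lemma l2norm_eq {k : ℕ} (v : Fin k → ℝ) :
    l2norm v = ‖(WithLp.equiv 2 (Fin k → ℝ)).symm v‖ := by
  rw [EuclideanSpace.norm_eq]; simp [l2norm, sq_abs]

lemma dotp_eq {k : ℕ} (u v : Fin k → ℝ) :
    dotp u v = inner ℝ ((WithLp.equiv 2 (Fin k → ℝ)).symm u) ((WithLp.equiv 2 (Fin k → ℝ)).symm v) := by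
  rw [PiLp.inner_apply]; simp [dotp, mul_comm]

lemma l2norm_nonneg {k : ℕ} (v : Fin k → ℝ) : 0 ≤ l2norm v := Real.sqrt_nonneg _

lemma l2norm_add_le {k : ℕ} (u v : Fin k → ℝ) : l2norm (u + v) ≤ l2norm u + l2norm v := by
  simp only [l2norm_eq]; exact norm_add_le _ _

lemma l2norm_smul {k : ℕ} (a : ℝ) (v : Fin k → ℝ) : l2norm (a • v) = |a| * l2norm v := by
  simp only [l2norm_eq]
  rw [show (WithLp.equiv 2 (Fin k → ℝ)).symm (a • v)
      = a • (WithLp.equiv 2 (Fin k → ℝ)).symm v from rfl]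
  rw [norm_smul]; simp

lemma dotp_le {k : ℕ} (u v : Fin k → ℝ) : dotp u v ≤ l2norm u * l2norm v := by
  rw [dotp_eq, l2norm_eq, l2norm_eq]; exact real_inner_le_norm _ _

lemma l2norm_sub_sq {k : ℕ} (u v : Fin k → ℝ) :
    l2norm (u - v) ^ 2 = l2norm u ^ 2 - 2 * dotp u v + l2norm v ^ 2 := by
  simp only [l2norm_eq, dotp_eq]
  rw [show (WithLp.equiv 2 (Fin k → ℝ)).symm (u - v) = (WithLp.equiv 2 (Fin k → ℝ)).symm u
      - (WithLp.equiv 2 (Fin k → ℝ)).symm v from rfl]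
  exact norm_sub_sq_real _ _

lemma dotp_comm {k : ℕ} (u v : Fin k → ℝ) : dotp u v = dotp v u := by
  simp [dotp, mul_comm]

lemma dotp_add_right {k : ℕ} (e u v : Fin k → ℝ) : dotp e (u + v) = dotp e u + dotp e v := by
  simp [dotp, mul_add, Finset.sum_add_distrib]

lemma dotp_smul_right {k : ℕ} (a : ℝ) (e v : Fin k → ℝ) : dotp e (a • v) = a * dotp e v := by
  simp [dotp, Finset.mul_sum, mul_left_comm]

lemma ereal_coe_ennreal_ne_top {x : ℝ≥0∞} (hx : x ≠ ⊤) :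
    (x : EReal) = ((x.toReal : ℝ) : EReal) := by
  conv_lhs => rw [← ENNReal.ofReal_toReal hx]
  rw [EReal.coe_ennreal_ofReal, max_eq_left ENNReal.toReal_nonneg]

lemma ereal_mul_sub (a c : ℝ) (ha : 0 < a) (x : EReal) :
    (a : EReal) * (x - (c : ℝ)) = (a : EReal) * x - ((a * c : ℝ) : EReal) := by
  have ha' : (0 : EReal) < (a : ℝ) := by exact_mod_cast ha
  induction x using EReal.rec with
  | bot => rw [EReal.bot_sub, EReal.mul_bot_of_pos ha', EReal.bot_sub]
  | coe x =>
      rw [← EReal.coe_sub, ← EReal.coe_mul, ← EReal.coe_mul, ← EReal.coe_sub]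
      ring_nf
  | top => rw [EReal.top_sub_coe, EReal.mul_top_of_pos ha', EReal.top_sub_coe]

lemma ennreal_pen_ineq {A B : ℝ} (hA : 0 ≤ A) (hB : 0 ≤ B) {x y : ℝ≥0∞} (hx : x ≠ ⊤) (hy : y ≠ ⊤)
    (hle : ENNReal.ofReal A + 2 * x ≤ ENNReal.ofReal B + 2 * y) :
    A + 2 * x.toReal ≤ B + 2 * y.toReal := by
  have h2 : ∀ {z : ℝ≥0∞}, z ≠ ⊤ → 2 * z = ENNReal.ofReal (2 * z.toReal) := by
    intro z hz
    rw [ENNReal.ofReal_mul (by norm_num : (0:ℝ) ≤ 2), ENNReal.ofReal_toReal hz,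
      ENNReal.ofReal_ofNat]
  rw [h2 hx, h2 hy, ← ENNReal.ofReal_add hA (by positivity),
    ← ENNReal.ofReal_add hB (by positivity),
    ENNReal.ofReal_le_ofReal_iff (by positivity)] at hle
  exact hle

/-- Key deterministic inequality: optimality of `bhat` + convexity of `h`. -/
lemma key_ineq {n p : ℕ} (X : Matrix (Fin n) (Fin p) ℝ) (bss : Fin p → ℝ) (ε : Fin n → ℝ)
    (y : Fin n → ℝ) (hy : y = X.mulVec bss + ε)
    (h : (Fin p → ℝ) → ℝ≥0∞)
    (hconv : ∀ b₁ b₂ : Fin p → ℝ, ∀ a : ℝ, 0 ≤ a → a ≤ 1 →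
      h (a • b₁ + (1 - a) • b₂) ≤ ENNReal.ofReal a * h b₁ + ENNReal.ofReal (1 - a) * h b₂)
    (bhat : Fin p → ℝ)
    (hmin : ∀ b : Fin p → ℝ,
      ENNReal.ofReal (l2norm (X.mulVec bhat - y) ^ 2) + 2 * h bhat ≤
        ENNReal.ofReal (l2norm (X.mulVec b - y) ^ 2) + 2 * h b)
    (hhat : h bhat ≠ ⊤)
    (t : ℝ) (b : Fin p → ℝ) (hb : h b ≠ ⊤)
    (hbt : l2norm (X.mulVec (b - bss)) ≤ t) :
    dotp ε (X.mulVec (b - bss)) - (h b).toReal ≤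
      dotp ε (X.mulVec (bhat - bss)) - (h bhat).toReal
        + t * l2norm (X.mulVec (bhat - bss)) - (l2norm (X.mulVec (bhat - bss))) ^ 2 := by
  set v := X.mulVec (b - bss) with hv
  set vh := X.mulVec (bhat - bss) with hvh
  set r := l2norm vh with hrdef
  have hr0 : 0 ≤ r := l2norm_nonneg _
  set Hb := (h b).toReal with hHb
  set Hh := (h bhat).toReal with hHh
  have hHb0 : 0 ≤ Hb := ENNReal.toReal_nonneg
  have hHh0 : 0 ≤ Hh := ENNReal.toReal_nonneg
  refine le_of_forall_pos_le_add fun δ hδ => ?_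
  set q := (t - r) ^ 2 with hq
  have hq0 : 0 ≤ q := sq_nonneg _
  have hq1 : (0:ℝ) < q / 2 + 1 := by positivity
  set θ := min 1 (δ / (q / 2 + 1)) with hθdef
  have hθpos : 0 < θ := lt_min one_pos (div_pos hδ hq1)
  have hθ1 : θ ≤ 1 := min_le_left _ _
  have hθδ : θ * q ≤ 2 * δ := by
    have h4 : θ ≤ δ / (q / 2 + 1) := min_le_right _ _
    rw [le_div_iff₀ hq1] at h4
    nlinarith [hθpos.le]
  set bθ := θ • b + (1 - θ) • bhat with hbθ
  have hconvθ := hconv b bhat θ hθpos.le hθ1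
  have hcombo0 : 0 ≤ θ * Hb + (1 - θ) * Hh := by nlinarith
  have hbθ_le : h bθ ≤ ENNReal.ofReal (θ * Hb + (1 - θ) * Hh) := by
    calc h bθ ≤ ENNReal.ofReal θ * h b + ENNReal.ofReal (1 - θ) * h bhat := hconvθ
      _ = ENNReal.ofReal (θ * Hb + (1 - θ) * Hh) := by
          rw [ENNReal.ofReal_add (by nlinarith) (by nlinarith),
            ENNReal.ofReal_mul hθpos.le, ENNReal.ofReal_mul (by linarith),
            ENNReal.ofReal_toReal hb, ENNReal.ofReal_toReal hhat]
  have hbθtop : h bθ ≠ ⊤ := (lt_of_le_of_lt hbθ_le ENNReal.ofReal_lt_top).ne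
  set Hθ := (h bθ).toReal with hHθdef
  have hHθ : Hθ ≤ θ * Hb + (1 - θ) * Hh := by
    have := ENNReal.toReal_mono ENNReal.ofReal_ne_top hbθ_le
    rwa [ENNReal.toReal_ofReal hcombo0] at this
  have hm := hmin bθ
  have hreal : l2norm (X.mulVec bhat - y) ^ 2 + 2 * Hh ≤
      l2norm (X.mulVec bθ - y) ^ 2 + 2 * Hθ :=
    ennreal_pen_ineq (by positivity) (by positivity) hhat hbθtop hm
  have hres1 : X.mulVec bhat - y = vh - ε := by
    rw [hy, hvh, Matrix.mulVec_sub]; abel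
  have hres2 : X.mulVec bθ - y = (θ • v + (1 - θ) • vh) - ε := by
    rw [hy, hv, hvh, hbθ]
    rw [Matrix.mulVec_sub, Matrix.mulVec_sub, Matrix.mulVec_add, Matrix.mulVec_smul,
      Matrix.mulVec_smul]
    ext i; simp; ring
  rw [hres1, hres2] at hreal
  set vθ := θ • v + (1 - θ) • vh with hvθ
  rw [l2norm_sub_sq, l2norm_sub_sq] at hreal
  have hdotθ : dotp vθ ε = θ * dotp ε v + (1 - θ) * dotp ε vh := by
    rw [hvθ, dotp_comm, dotp_add_right, dotp_smul_right, dotp_smul_right]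
  rw [hdotθ] at hreal
  have hnθ : l2norm vθ ≤ θ * t + (1 - θ) * r := by
    calc l2norm vθ ≤ l2norm (θ • v) + l2norm ((1 - θ) • vh) := l2norm_add_le _ _
      _ = |θ| * l2norm v + |1 - θ| * l2norm vh := by rw [l2norm_smul, l2norm_smul]
      _ = θ * l2norm v + (1 - θ) * r := by
          rw [abs_of_nonneg hθpos.le, abs_of_nonneg (by linarith : (0:ℝ) ≤ 1 - θ)]
      _ ≤ θ * t + (1 - θ) * r := by nlinarith [l2norm_nonneg v]
  have hnθ0 : 0 ≤ l2norm vθ := l2norm_nonneg _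
  have hsq : l2norm vθ ^ 2 ≤ (θ * t + (1 - θ) * r) ^ 2 := by nlinarith
  have hdvh : dotp vh ε = dotp ε vh := dotp_comm _ _
  rw [hdvh, ← hrdef] at hreal
  have hsq' : l2norm vθ ^ 2 ≤ r^2 + 2*θ*(t-r)*r + θ^2*(t-r)^2 := by
    have hid : (θ*t+(1-θ)*r)^2 = r^2 + 2*θ*(t-r)*r + θ^2*(t-r)^2 := by ring
    linarith [hsq]
  have key2 : 2*θ*(dotp ε v - Hb) ≤ 2*θ*(dotp ε vh - Hh) + 2*θ*(t-r)*r + θ^2*(t-r)^2 := by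
    linarith [hreal, hsq', hHθ]
  have key3 : θ^2*(t-r)^2 ≤ 2*θ*δ := by
    have h7 := mul_le_mul_of_nonneg_left hθδ hθpos.le
    calc θ^2*(t-r)^2 = θ*(θ*q) := by rw [hq]; ring
      _ ≤ θ*(2*δ) := h7
      _ = 2*θ*δ := by ring
  by_contra hcon
  push_neg at hcon
  linarith [key2, key3, mul_pos hθpos (sub_pos.mpr hcon)]

/-- for a convex, proper penalty such that the penalized least-squares problem
always has a solution, the function `G` is concave on `[0,∞)` and the prediction error
`‖X(β̂-β*)‖` is a maximizer of `G`. -/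
theorem G_concave_and_maximized_at_prediction_error {n p : ℕ}
    (X : Matrix (Fin n) (Fin p) ℝ) (bs : Fin p → ℝ) (ε : Fin n → ℝ)
    (y : Fin n → ℝ) (hy : y = X.mulVec bs + ε)
    (h : (Fin p → ℝ) → ℝ≥0∞)
    (hconv : ∀ b₁ b₂ : Fin p → ℝ, ∀ a : ℝ, 0 ≤ a → a ≤ 1 →
      h (a • b₁ + (1 - a) • b₂) ≤ ENNReal.ofReal a * h b₁ + ENNReal.ofReal (1 - a) * h b₂)
    (hproper : ∃ b : Fin p → ℝ, h b ≠ ⊤)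
    (hexists : ∀ (y' : Fin n → ℝ) (X' : Matrix (Fin n) (Fin p) ℝ),
      ∃ bhat' : Fin p → ℝ, ∀ b : Fin p → ℝ,
        ENNReal.ofReal (l2norm (X'.mulVec bhat' - y') ^ 2) + 2 * h bhat' ≤
          ENNReal.ofReal (l2norm (X'.mulVec b - y') ^ 2) + 2 * h b)
    (bhat : Fin p → ℝ)
    (hmin : ∀ b : Fin p → ℝ,
      ENNReal.ofReal (l2norm (X.mulVec bhat - y) ^ 2) + 2 * h bhat ≤
        ENNReal.ofReal (l2norm (X.mulVec b - y) ^ 2) + 2 * h b) :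
    (∀ s t : ℝ, 0 ≤ s → 0 ≤ t → ∀ a : ℝ, 0 ≤ a → a ≤ 1 →
      (a : EReal) * Gval X bs h ε (l2norm (X.mulVec (bhat - bs))) s +
        ((1 - a : ℝ) : EReal) * Gval X bs h ε (l2norm (X.mulVec (bhat - bs))) t ≤
      Gval X bs h ε (l2norm (X.mulVec (bhat - bs))) (a * s + (1 - a) * t)) ∧
    (∀ t : ℝ, 0 ≤ t →
      Gval X bs h ε (l2norm (X.mulVec (bhat - bs))) t ≤
        Gval X bs h ε (l2norm (X.mulVec (bhat - bs))) (l2norm (X.mulVec (bhat - bs)))) := by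
  classical
  obtain ⟨b₀, hb₀⟩ := hproper
  have hhat : h bhat ≠ ⊤ := by
    intro htop
    have hm := hmin b₀
    rw [htop] at hm
    have htt : (⊤ : ℝ≥0∞) ≤ ENNReal.ofReal (l2norm (X.mulVec b₀ - y) ^ 2) + 2 * h b₀ := by
      simpa [ENNReal.mul_top] using hm
    have hne : ENNReal.ofReal (l2norm (X.mulVec b₀ - y) ^ 2) + 2 * h b₀ ≠ ⊤ :=
      ENNReal.add_ne_top.mpr ⟨ENNReal.ofReal_ne_top, ENNReal.mul_ne_top (by norm_num) hb₀⟩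
    exact hne (top_le_iff.mp htt)
  set r := l2norm (X.mulVec (bhat - bs)) with hrdef
  have hr0 : 0 ≤ r := l2norm_nonneg _
  set S : ℝ → Set EReal := fun t => {x : EReal | ∃ b : Fin p → ℝ,
      l2norm (X.mulVec (b - bs)) ≤ t ∧
      x = (dotp ε (X.mulVec (b - bs)) : EReal) - (h b : EReal)} with hS
  have hG : ∀ t : ℝ, Gval X bs h ε r t = sSup (S t) - ((t * r : ℝ) : EReal) := fun _ => rfl
  set Mh : ℝ := dotp ε (X.mulVec (bhat - bs)) - (h bhat).toReal with hMh
  have hMh_mem : (Mh : EReal) ∈ S r := by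
    refine ⟨bhat, le_of_eq hrdef.symm, ?_⟩
    rw [hMh, EReal.coe_sub, ereal_coe_ennreal_ne_top hhat]
  have hFub : ∀ t : ℝ, 0 ≤ t → sSup (S t) ≤ ((l2norm ε * t : ℝ) : EReal) := by
    intro t ht
    refine sSup_le ?_
    intro x hx
    simp only [hS, Set.mem_setOf_eq] at hx
    obtain ⟨b, hb1, rfl⟩ := hx
    by_cases hbtop : h b = ⊤
    · rw [hbtop, EReal.coe_ennreal_top, EReal.sub_top]; exact bot_le
    · rw [ereal_coe_ennreal_ne_top hbtop, ← EReal.coe_sub, EReal.coe_le_coe_iff]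
      have h1 := dotp_le ε (X.mulVec (b - bs))
      have h2 := l2norm_nonneg ε
      have h3 : (0:ℝ) ≤ (h b).toReal := ENNReal.toReal_nonneg
      nlinarith [mul_le_mul_of_nonneg_left hb1 h2]
  constructor
  · -- concavity
    intro s t hs ht a ha0 ha1
    rcases eq_or_lt_of_le ha0 with h0 | h0
    · subst h0; norm_num
    rcases eq_or_lt_of_le ha1 with h1 | h1
    · subst h1; norm_num
    have h1a : 0 < 1 - a := by linarith
    rw [hG s, hG t, hG (a * s + (1 - a) * t)]
    have hapos : (0:EReal) < ((a:ℝ) : EReal) := by exact_mod_cast h0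
    have h1apos : (0:EReal) < ((1 - a : ℝ) : EReal) := by exact_mod_cast h1a
    by_cases hFs : sSup (S s) = ⊥
    · rw [hFs, EReal.bot_sub, EReal.mul_bot_of_pos hapos, EReal.bot_add]; exact bot_le
    by_cases hFt : sSup (S t) = ⊥
    · rw [hFt, EReal.bot_sub, EReal.mul_bot_of_pos h1apos, EReal.add_bot]; exact bot_le
    have hFs_top : sSup (S s) ≠ ⊤ := ((hFub s hs).trans_lt (EReal.coe_lt_top _)).ne
    have hFt_top : sSup (S t) ≠ ⊤ := ((hFub t ht).trans_lt (EReal.coe_lt_top _)).ne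
    obtain ⟨fs, hfs⟩ : ∃ z : ℝ, sSup (S s) = (z : EReal) :=
      ⟨_, (EReal.coe_toReal hFs_top hFs).symm⟩
    obtain ⟨ft, hft⟩ : ∃ z : ℝ, sSup (S t) = (z : EReal) :=
      ⟨_, (EReal.coe_toReal hFt_top hFt).symm⟩
    rw [hfs, hft, ereal_mul_sub a (s*r) h0 _, ereal_mul_sub (1-a) (t*r) h1a _]
    have hmain : ((a*fs + (1-a)*ft : ℝ) : EReal) ≤ sSup (S (a*s + (1-a)*t)) := by
      have happrox : ∀ δ : ℝ, 0 < δ → ∃ x ∈ S (a*s + (1-a)*t),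
          ((a*fs + (1-a)*ft - δ : ℝ) : EReal) < x := by
        intro δ hδ
        obtain ⟨x₁, hx₁S, hx₁⟩ := lt_sSup_iff.mp (show ((fs - δ : ℝ) : EReal) < sSup (S s) by
          rw [hfs]; exact_mod_cast sub_lt_self fs hδ)
        obtain ⟨x₂, hx₂S, hx₂⟩ := lt_sSup_iff.mp (show ((ft - δ : ℝ) : EReal) < sSup (S t) by
          rw [hft]; exact_mod_cast sub_lt_self ft hδ)
        simp only [hS, Set.mem_setOf_eq] at hx₁S hx₂S
        obtain ⟨b₁, hb₁n, rfl⟩ := hx₁S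
        obtain ⟨b₂, hb₂n, rfl⟩ := hx₂S
        have hb₁top : h b₁ ≠ ⊤ := by
          intro htop; rw [htop, EReal.coe_ennreal_top, EReal.sub_top] at hx₁
          exact not_lt_bot hx₁
        have hb₂top : h b₂ ≠ ⊤ := by
          intro htop; rw [htop, EReal.coe_ennreal_top, EReal.sub_top] at hx₂
          exact not_lt_bot hx₂
        rw [ereal_coe_ennreal_ne_top hb₁top, ← EReal.coe_sub, EReal.coe_lt_coe_iff] at hx₁
        rw [ereal_coe_ennreal_ne_top hb₂top, ← EReal.coe_sub, EReal.coe_lt_coe_iff] at hx₂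
        set H₁ := (h b₁).toReal with hH₁
        set H₂ := (h b₂).toReal with hH₂
        have hH₁0 : 0 ≤ H₁ := ENNReal.toReal_nonneg
        have hH₂0 : 0 ≤ H₂ := ENNReal.toReal_nonneg
        set bnew := a • b₁ + (1-a) • b₂ with hbnew
        have hdec : X.mulVec (bnew - bs)
            = a • X.mulVec (b₁ - bs) + (1-a) • X.mulVec (b₂ - bs) := by
          have hsplit : bnew - bs = a • (b₁ - bs) + (1-a) • (b₂ - bs) := by
            ext i; simp [hbnew]; ring
          rw [hsplit, Matrix.mulVec_add, Matrix.mulVec_smul, Matrix.mulVec_smul]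
        have hnorm : l2norm (X.mulVec (bnew - bs)) ≤ a*s + (1-a)*t := by
          rw [hdec]
          calc l2norm (a • X.mulVec (b₁ - bs) + (1-a) • X.mulVec (b₂ - bs))
              ≤ l2norm (a • X.mulVec (b₁ - bs)) + l2norm ((1-a) • X.mulVec (b₂ - bs)) :=
                l2norm_add_le _ _
            _ = a * l2norm (X.mulVec (b₁ - bs)) + (1-a) * l2norm (X.mulVec (b₂ - bs)) := by
                rw [l2norm_smul, l2norm_smul, abs_of_nonneg ha0, abs_of_nonneg h1a.le]
            _ ≤ a*s + (1-a)*t := by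
                have := mul_le_mul_of_nonneg_left hb₁n ha0
                have := mul_le_mul_of_nonneg_left hb₂n h1a.le
                linarith
        have hcomb := hconv b₁ b₂ a ha0 ha1
        have hble : h bnew ≤ ENNReal.ofReal (a * H₁ + (1-a) * H₂) := by
          calc h bnew ≤ ENNReal.ofReal a * h b₁ + ENNReal.ofReal (1-a) * h b₂ := hcomb
            _ = ENNReal.ofReal (a * H₁ + (1-a) * H₂) := by
                rw [ENNReal.ofReal_add (by nlinarith) (by nlinarith),
                  ENNReal.ofReal_mul ha0, ENNReal.ofReal_mul h1a.le,
                  ENNReal.ofReal_toReal hb₁top, ENNReal.ofReal_toReal hb₂top]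
        have hbtop : h bnew ≠ ⊤ := (lt_of_le_of_lt hble ENNReal.ofReal_lt_top).ne
        have hbH : (h bnew).toReal ≤ a*H₁ + (1-a)*H₂ := by
          have := ENNReal.toReal_mono ENNReal.ofReal_ne_top hble
          rwa [ENNReal.toReal_ofReal (by nlinarith)] at this
        refine ⟨_, ⟨bnew, hnorm, rfl⟩, ?_⟩
        rw [ereal_coe_ennreal_ne_top hbtop, ← EReal.coe_sub, EReal.coe_lt_coe_iff]
        have hdot : dotp ε (X.mulVec (bnew - bs))
            = a * dotp ε (X.mulVec (b₁ - bs)) + (1-a) * dotp ε (X.mulVec (b₂ - bs)) := by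
          rw [hdec, dotp_add_right, dotp_smul_right, dotp_smul_right]
        rw [hdot]
        have hp1 := mul_lt_mul_of_pos_left hx₁ h0
        have hp2 := mul_lt_mul_of_pos_left hx₂ h1a
        nlinarith [hbH, hp1, hp2]
      refine le_of_forall_lt fun c hc => ?_
      induction c using EReal.rec with
      | bot =>
          obtain ⟨x, hxS, hx⟩ := happrox 1 one_pos
          exact lt_of_lt_of_le (lt_of_le_of_lt bot_le hx) (le_sSup hxS)
      | coe c =>
          have hcr : c < a*fs + (1-a)*ft := by exact_mod_cast hc
          obtain ⟨x, hxS, hx⟩ := happrox (a*fs + (1-a)*ft - c) (by linarith)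
          refine lt_of_lt_of_le (lt_of_le_of_lt ?_ hx) (le_sSup hxS)
          exact_mod_cast (by linarith : c ≤ a*fs + (1-a)*ft - (a*fs + (1-a)*ft - c))
      | top => exact absurd hc (by simp)
    have hgoal : ((a*fs + (1-a)*ft : ℝ) : EReal) - (((a*s + (1-a)*t) * r : ℝ) : EReal)
        ≤ sSup (S (a*s + (1-a)*t)) - (((a*s + (1-a)*t) * r : ℝ) : EReal) :=
      EReal.sub_le_sub hmain le_rfl
    refine le_trans (le_of_eq ?_) hgoal
    norm_cast
    ring
  · -- maximality at r
    intro t ht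
    rw [hG t, hG r]
    have hkey : sSup (S t) ≤ ((Mh + t*r - r*r : ℝ) : EReal) := by
      refine sSup_le ?_
      intro x hx
      simp only [hS, Set.mem_setOf_eq] at hx
      obtain ⟨b, hb1, rfl⟩ := hx
      by_cases hbtop : h b = ⊤
      · rw [hbtop, EReal.coe_ennreal_top, EReal.sub_top]; exact bot_le
      · rw [ereal_coe_ennreal_ne_top hbtop, ← EReal.coe_sub, EReal.coe_le_coe_iff]
        have hki := key_ineq X bs ε y hy h hconv bhat hmin hhat t b hbtop hb1
        rw [← hrdef] at hki
        have hsqr : r^2 = r*r := sq r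
        rw [hMh]
        linarith [hki]
    calc sSup (S t) - ((t*r : ℝ) : EReal)
        ≤ ((Mh + t*r - r*r : ℝ) : EReal) - ((t*r : ℝ) : EReal) := EReal.sub_le_sub hkey le_rfl
      _ = ((Mh - r*r : ℝ) : EReal) := by rw [← EReal.coe_sub]; norm_cast; ring
      _ = ((Mh : ℝ) : EReal) - ((r*r : ℝ) : EReal) := by rw [← EReal.coe_sub]
      _ ≤ sSup (S r) - ((r*r : ℝ) : EReal) := EReal.sub_le_sub (le_sSup hMh_mem) le_rfl
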